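/- Let t ≥ 3 be a natural number and let G be a finite simple graph that contains an induced diamond. Let S be an independent set of G such that G ⊕ S is diamond-free and K_{1,t}-free. Then S is exactly the set of all vertices of G that occur as a degree-2 vertex of some induced diamond of G. -/

import Mathlib

/-- Subgraph complementation: `scompl G S` complements the subgraph of `G` induced by `S`. -/
def scompl {V : Type*} (G : SimpleGraph V) (S : Set V) : SimpleGraph V where
  Adj x y := x ≠ y ∧ ((x ∈ S ∧ y ∈ S ∧ ¬ G.Adj x y) ∨ (¬(x ∈ S ∧ y ∈ S) ∧ G.Adj x y))
  symm := by
    constructor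
    rintro x y ⟨hxy, h⟩
    refine ⟨hxy.symm, ?_⟩
    rcases h with ⟨hx, hy, h⟩ | ⟨h, hadj⟩
    · exact Or.inl ⟨hy, hx, fun h' => h (h'.symm)⟩
    · exact Or.inr ⟨fun hc => h ⟨hc.2, hc.1⟩, hadj.symm⟩
  loopless := ⟨fun x h => h.1 rfl⟩

/-- Degree of a vertex in a finite simple graph. -/
noncomputable def deg {V : Type*} [Fintype V] (G : SimpleGraph V) (v : V) : ℕ :=
  (G.neighborSet v).ncard

/-- `a, b, c, d` form an induced diamond with `a`, `b` its degree-2 vertices. -/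
def IsDiamond {V : Type*} (G : SimpleGraph V) (a b c d : V) : Prop :=
  a ≠ b ∧ a ≠ c ∧ a ≠ d ∧ b ≠ c ∧ b ≠ d ∧ c ≠ d ∧
  G.Adj a c ∧ G.Adj a d ∧ G.Adj b c ∧ G.Adj b d ∧ G.Adj c d ∧ ¬ G.Adj a b

def DiamondFree {V : Type*} (G : SimpleGraph V) : Prop :=
  ∀ a b c d : V, ¬ IsDiamond G a b c d

/-- `r` together with the `t` distinct leaves `f 0, …, f (t-1)` forms an induced `K_{1,t}`
with center `r`. -/
def IsStar {V : Type*} (G : SimpleGraph V) (t : ℕ) (r : V) (f : Fin t → V) : Prop :=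
  Function.Injective f ∧ (∀ i, G.Adj r (f i)) ∧ ∀ i j, i ≠ j → ¬ G.Adj (f i) (f j)

def StarFree {V : Type*} (G : SimpleGraph V) (t : ℕ) : Prop :=
  ∀ (r : V) (f : Fin t → V), ¬ IsStar G t r f

theorem stmt6 {V : Type*} [Fintype V] (t : ℕ) (ht : 3 ≤ t) (G : SimpleGraph V)
    (hdiam : ∃ a b c d : V, IsDiamond G a b c d)
    (S : Set V) (hind : ∀ x ∈ S, ∀ y ∈ S, ¬ G.Adj x y)
    (hdf : DiamondFree (scompl G S)) (hsf : StarFree (scompl G S) t) :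
    S = {v : V | ∃ b c d : V, IsDiamond G v b c d} := by
  have liftAdj : ∀ x y, G.Adj x y → (scompl G S).Adj x y := fun x y h =>
    ⟨G.ne_of_adj h, Or.inr ⟨fun hc => hind x hc.1 y hc.2 h, h⟩⟩
  have key : ∀ a b c d : V, IsDiamond G a b c d → a ∈ S ∧ b ∈ S := by
    intro a b c d hD
    obtain ⟨hab, hac, had, hbc, hbd, hcd, ac, ad, bc, bd, cd, nab⟩ := hD
    by_contra hcon
    exact hdf a b c d ⟨hab, hac, had, hbc, hbd, hcd,
      liftAdj _ _ ac, liftAdj _ _ ad, liftAdj _ _ bc, liftAdj _ _ bd, liftAdj _ _ cd,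
      fun h => by
        rcases h.2 with ⟨ha, hb, _⟩ | ⟨_, hadj⟩
        · exact hcon ⟨ha, hb⟩
        · exact nab hadj⟩
  ext s
  simp only [Set.mem_setOf_eq]
  constructor
  · intro hs
    obtain ⟨a, b, c, d, hD⟩ := hdiam
    obtain ⟨ha, hb⟩ := key a b c d hD
    obtain ⟨hab, hac, had, hbc, hbd, hcd, ac, ad, bc, bd, cd, nab⟩ := hD
    by_cases hsa : s = a
    · subst hsa; exact ⟨b, c, d, hab, hac, had, hbc, hbd, hcd, ac, ad, bc, bd, cd, nab⟩
    by_cases hsb : s = b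
    · subst hsb
      exact ⟨a, c, d, Ne.symm hab, hbc, hbd, hac, had, hcd, bc, bd, ac, ad, cd,
        fun h => nab h.symm⟩
    have hcS : c ∉ S := fun hc => hind a ha c hc ac
    have hdS : d ∉ S := fun hd => hind a ha d hd ad
    have hsc : s ≠ c := fun h => hcS (h ▸ hs)
    have hsd : s ≠ d := fun h => hdS (h ▸ hs)
    have adjS : ∀ x, x ≠ s → x ≠ a → x ≠ b → x ∉ S → G.Adj a x → G.Adj b x → G.Adj s x := by
      intro x hxs hxa hxb hxS hax hbx
      by_contra hnsx
      exact hdf x s a b ⟨hxs, hxa, hxb, hsa, hsb, hab,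
        liftAdj _ _ hax.symm, liftAdj _ _ hbx.symm,
        ⟨hsa, Or.inl ⟨hs, ha, hind s hs a ha⟩⟩,
        ⟨hsb, Or.inl ⟨hs, hb, hind s hs b hb⟩⟩,
        ⟨hab, Or.inl ⟨ha, hb, nab⟩⟩,
        fun h => by
          rcases h.2 with ⟨hxS', _, _⟩ | ⟨_, hadj⟩
          · exact hxS hxS'
          · exact hnsx hadj.symm⟩
    have sc : G.Adj s c := adjS c (Ne.symm hsc) (Ne.symm hac) (Ne.symm hbc) hcS ac bc
    have sd : G.Adj s d := adjS d (Ne.symm hsd) (Ne.symm had) (Ne.symm hbd) hdS ad bd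
    exact ⟨a, c, d, hsa, hsc, hsd, hac, had, hcd, sc, sd, ac, ad, cd, hind s hs a ha⟩
  · rintro ⟨b, c, d, hD⟩
    exact (key s b c d hD).1
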